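/- Let X be a real n×q matrix, Z a real m×q matrix, Q_R a real orthogonal m×m matrix, and D½ a real diagonal m×m matrix with nonnegative diagonal entries; set R = Q_R (D½)² Q_Rᵀ, suppose R_e := Z Zᵀ + R is invertible, and define K = (X Zᵀ) R_e⁻¹. Form the pre-array B = [ X − K Z , K Q_R D½ ] and suppose B = W S Vᵀ where W is an orthogonal n×n matrix, S is a diagonal n×n matrix, and V is a (q+m)×n matrix with orthonormal columns (VᵀV = I_n). Then W S² Wᵀ = X Xᵀ − K R_e Kᵀ; that is, the SVD factors read off from the pre-array B are exactly SVD factors of the conventional posterior error covariance P_{k|k} computed by the conventional cubature Kalman filter measurement update. -/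

import Mathlib

open Matrix

/-- If the posterior pre-array `B = [X − K Z, K Q_R D½]` has SVD
`B = W S Vᵀ`, then `W S² Wᵀ` equals the conventional posterior covariance
`X Xᵀ − K R_e Kᵀ`. -/
theorem posterior_svd_equiv_conventional (n m q : ℕ)
    (X : Matrix (Fin n) (Fin q) ℝ) (Z : Matrix (Fin m) (Fin q) ℝ)
    (QR Dhalf : Matrix (Fin m) (Fin m) ℝ)
    (hQR : QRᵀ * QR = 1) (hDhalf : Dhalf.IsDiag) (hDpos : ∀ i, 0 ≤ Dhalf i i)
    (R : Matrix (Fin m) (Fin m) ℝ) (hR : R = QR * (Dhalf * Dhalf) * QRᵀ)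
    (Re : Matrix (Fin m) (Fin m) ℝ) (hRe : Re = Z * Zᵀ + R)
    (hReInv : IsUnit Re)
    (K : Matrix (Fin n) (Fin m) ℝ) (hK : K = (X * Zᵀ) * Re⁻¹)
    (B : Matrix (Fin n) (Fin q ⊕ Fin m) ℝ)
    (hB : B = fromCols (X - K * Z) (K * QR * Dhalf))
    (W S : Matrix (Fin n) (Fin n) ℝ)
    (hW : Wᵀ * W = 1) (hS : S.IsDiag)
    (V : Matrix (Fin q ⊕ Fin m) (Fin n) ℝ) (hV : Vᵀ * V = 1)
    (hSVD : B = W * S * Vᵀ) :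
    W * S ^ 2 * Wᵀ = X * Xᵀ - K * Re * Kᵀ := by

  have hSsym : Sᵀ = S := by
    ext i j
    by_cases h : i = j
    · subst h; simp
    · rw [Matrix.transpose_apply, hS (Ne.symm h), hS h]
  have hDsym : Dhalfᵀ = Dhalf := by
    ext i j
    by_cases h : i = j
    · subst h; simp
    · rw [Matrix.transpose_apply, hDhalf (Ne.symm h), hDhalf h]
  have hRsym : Rᵀ = R := by
    rw [hR]
    simp only [Matrix.transpose_mul, Matrix.transpose_transpose, hDsym]
    simp only [Matrix.mul_assoc]
  have hResym : Reᵀ = Re := by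
    rw [hRe]; simp [Matrix.transpose_mul, hRsym]
  have hdet : IsUnit Re.det := (Matrix.isUnit_iff_isUnit_det Re).mp hReInv
  have hKRe : K * Re = X * Zᵀ := by
    rw [hK, Matrix.nonsing_inv_mul_cancel_right _ _ hdet]
  have h1 : B * Bᵀ = W * S ^ 2 * Wᵀ := by
    rw [hSVD]
    simp only [Matrix.transpose_mul, Matrix.transpose_transpose]
    calc W * S * Vᵀ * (V * (Sᵀ * Wᵀ)) = W * S * (Vᵀ * V) * (Sᵀ * Wᵀ) := by
          simp only [Matrix.mul_assoc]
      _ = W * S ^ 2 * Wᵀ := by rw [hV, Matrix.mul_one, hSsym, sq]; simp [Matrix.mul_assoc]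
  have h2 : B * Bᵀ = X * Xᵀ - K * Re * Kᵀ := by
    rw [hB, Matrix.transpose_fromCols, Matrix.fromCols_mul_fromRows]
    have e1 : (X - K * Z) * (X - K * Z)ᵀ
        = X * Xᵀ - K * Z * Xᵀ - X * Zᵀ * Kᵀ + K * (Z * Zᵀ) * Kᵀ := by
      simp only [Matrix.transpose_sub, Matrix.transpose_mul, Matrix.sub_mul,
        Matrix.mul_sub, Matrix.mul_assoc]
      abel
    have e2 : K * QR * Dhalf * (K * QR * Dhalf)ᵀ = K * R * Kᵀ := by
      simp only [Matrix.transpose_mul, hDsym, hR, Matrix.mul_assoc]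
    rw [e1, e2]
    have hXZK : X * Zᵀ * Kᵀ = K * Re * Kᵀ := by rw [hKRe]
    have hKZX : K * Z * Xᵀ = K * Re * Kᵀ := by
      have := congrArg Matrix.transpose hKRe
      simp only [Matrix.transpose_mul, hResym] at this
      calc K * Z * Xᵀ = K * (Z * Xᵀ) := by rw [Matrix.mul_assoc]
        _ = K * (Zᵀᵀ * Xᵀ) := by rw [Matrix.transpose_transpose]
        _ = K * (Re * Kᵀ) := by rw [← this]
        _ = K * Re * Kᵀ := by rw [Matrix.mul_assoc]
    have hKZZ : K * (Z * Zᵀ) * Kᵀ + K * R * Kᵀ = K * Re * Kᵀ := by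
      rw [hRe, Matrix.mul_add, Matrix.add_mul]
    rw [hXZK, hKZX]
    rw [add_assoc, hKZZ]
    abel
  rw [← h1, h2]
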